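/- For every real x > 0, x^{x - 1/2} / (Γ(x) e^x) < 1/√(2π). -/

import Mathlib

open Real Filter Topology Finset

noncomputable def Fb (x : ℝ) : ℝ := Real.log (Real.Gamma x) - (x - 1/2) * Real.log x + x

lemma aux_log {u : ℝ} (hu : 0 < u) : 2*u/(2+u) < Real.log (1+u) := by
  have key : StrictMonoOn (fun u : ℝ => Real.log (1+u) - 2*u/(2+u)) (Set.Ici 0) := by
    apply strictMonoOn_of_deriv_pos (convex_Ici 0)
    · apply ContinuousOn.sub
      · apply ContinuousOn.log (by fun_prop)
        intro t ht; simp only [Set.mem_Ici] at ht; nlinarith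
      · apply ContinuousOn.div (by fun_prop) (by fun_prop)
        intro t ht; simp only [Set.mem_Ici] at ht; nlinarith
    · intro t ht
      rw [interior_Ici, Set.mem_Ioi] at ht
      have h1 : (1:ℝ) + t ≠ 0 := by nlinarith
      have h2 : (2:ℝ) + t ≠ 0 := by nlinarith
      have hd2 : HasDerivAt (fun u : ℝ => 2*u/(2+u)) (4/(2+t)^2) t := by
        have h := ((hasDerivAt_id t).const_mul 2).fun_div ((hasDerivAt_id t).const_add 2) h2
        simp only [id] at h
        refine h.congr_deriv ?_
        ring
      have hd : HasDerivAt (fun u : ℝ => Real.log (1+u) - 2*u/(2+u))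
          (1/(1+t) - 4/(2+t)^2) t := by
        apply HasDerivAt.sub _ hd2
        have := ((hasDerivAt_id t).const_add 1).log h1
        simpa using this
      rw [hd.deriv]
      rw [div_sub_div _ _ h1 (pow_ne_zero 2 h2), div_pos_iff]
      left
      constructor
      · nlinarith
      · positivity
  have h := key (Set.self_mem_Ici) (Set.mem_Ici.mpr hu.le) hu
  simpa using h

lemma Fb_step {x : ℝ} (hx : 0 < x) : Fb (x+1) < Fb x := by
  have hGpos : 0 < Real.Gamma x := Real.Gamma_pos_of_pos hx
  have hlog : Real.log (1 + 1/x) = Real.log (x+1) - Real.log x := by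
    rw [show (1:ℝ) + 1/x = (x+1)/x by field_simp, Real.log_div (by positivity) hx.ne']
  have h1 : 2/(2*x+1) < Real.log (1+1/x) := by
    have h := aux_log (show 0 < 1/x by positivity)
    have : 2*(1/x)/(2+1/x) = 2/(2*x+1) := by
      rw [div_eq_div_iff (by positivity) (by positivity)]; field_simp
    linarith [this ▸ h]
  have h2 : 1 < (x + 1/2) * Real.log (1+1/x) := by
    have e : (1:ℝ) = (x+1/2) * (2/(2*x+1)) := by
      rw [← mul_div_assoc, eq_div_iff (by positivity)]; ring
    calc (1:ℝ) = (x+1/2) * (2/(2*x+1)) := e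
    _ < (x+1/2) * Real.log (1+1/x) := by
        exact mul_lt_mul_of_pos_left h1 (by linarith)
  rw [hlog] at h2
  unfold Fb
  rw [Real.Gamma_add_one hx.ne', Real.log_mul hx.ne' hGpos.ne']
  nlinarith [h2]

lemma Gamma_add_nat {x : ℝ} (hx : 0 < x) (n : ℕ) :
    Real.Gamma (x + n) = Real.Gamma x * ∏ j ∈ Finset.range n, (x + j) := by
  induction n with
  | zero => simp
  | succ n ih =>
    have hxn : (0:ℝ) < x + n := by positivity
    have : (x : ℝ) + (n+1 : ℕ) = (x + n) + 1 := by push_cast; ring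
    rw [this, Real.Gamma_add_one hxn.ne', ih, Finset.prod_range_succ]
    ring

lemma Fb_tendsto {x : ℝ} (hx : 0 < x) :
    Tendsto (fun n : ℕ => Fb (x + n + 1)) atTop (𝓝 (Real.log (Real.sqrt (2*Real.pi)))) := by
  have hGpos : 0 < Real.Gamma x := Real.Gamma_pos_of_pos hx
  set g : ℕ → ℝ := fun n => Real.log (Stirling.stirlingSeq n) + (1/2)*Real.log 2 +
      (Real.log (Real.Gamma x) - Real.log (Real.GammaSeq x n)) -
      (x + n + 1/2) * Real.log (1 + (x+1)/n) + x + 1 with hg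
  have heq : (fun n : ℕ => Fb (x + n + 1)) =ᶠ[atTop] g := by
    filter_upwards [eventually_ge_atTop 1] with n hn
    have hn0 : (0:ℝ) < n := by exact_mod_cast hn
    have hfacpos : (0:ℝ) < (Nat.factorial n : ℝ) := by positivity
    have hPpos : (0:ℝ) < ∏ j ∈ Finset.range (n+1), (x + j) := by
      apply Finset.prod_pos; intro j _; positivity
    -- log of GammaSeq
    have hGS : Real.log (Real.GammaSeq x n) =
        x * Real.log n + Real.log (Nat.factorial n) - Real.log (∏ j ∈ Finset.range (n+1), (x + j)) := by
      unfold Real.GammaSeq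
      rw [Real.log_div (by positivity) hPpos.ne', Real.log_mul (by positivity) hfacpos.ne',
        Real.log_rpow hn0]
    -- log of stirlingSeq
    have hSt : Real.log (Stirling.stirlingSeq n) =
        Real.log (Nat.factorial n) - ((1/2)*Real.log 2 + (1/2)*Real.log n) - n*(Real.log n - 1) := by
      unfold Stirling.stirlingSeq
      rw [Real.log_div hfacpos.ne' (by positivity), Real.log_mul (by positivity) (by positivity),
        Real.log_sqrt (by positivity), Real.log_mul two_ne_zero hn0.ne', Real.log_pow,
        Real.log_div hn0.ne' (Real.exp_pos 1).ne', Real.log_exp]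
      ring
    -- log Gamma (x+n+1)
    have hGam : Real.log (Real.Gamma (x + n + 1)) =
        Real.log (Real.Gamma x) + Real.log (∏ j ∈ Finset.range (n+1), (x + j)) := by
      have e : x + (n:ℝ) + 1 = x + ((n+1 : ℕ) : ℝ) := by push_cast; ring
      rw [e, Gamma_add_nat hx, Real.log_mul hGpos.ne' hPpos.ne']
    -- log (x+n+1)
    have hlg : Real.log (x + n + 1) = Real.log (1 + (x+1)/n) + Real.log n := by
      rw [show (1:ℝ) + (x+1)/n = (x + n + 1)/n by field_simp; ring,
        Real.log_div (by positivity) hn0.ne']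
      ring
    unfold Fb
    rw [hGam, hlg, hg]
    beta_reduce
    rw [hGS, hSt]
    ring
  -- limit of g
  have h1 : Tendsto (fun n : ℕ => Real.log (Stirling.stirlingSeq n)) atTop
      (𝓝 (Real.log (Real.sqrt Real.pi))) :=
    Stirling.tendsto_stirlingSeq_sqrt_pi.log (by positivity)
  have h2 : Tendsto (fun n : ℕ => Real.log (Real.Gamma x) - Real.log (Real.GammaSeq x n)) atTop
      (𝓝 0) := by
    have := ((Real.GammaSeq_tendsto_Gamma x).log hGpos.ne')
    have h := this.const_sub (Real.log (Real.Gamma x))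
    simpa using h
  have hbase : Tendsto (fun n : ℕ => 1 + (x+1)/(n:ℝ)) atTop (𝓝 1) := by
    have := tendsto_const_div_atTop_nhds_zero_nat (x+1)
    have h := this.const_add (1:ℝ)
    simpa using h
  have h3 : Tendsto (fun n : ℕ => Real.log (1 + (x+1)/(n:ℝ))) atTop (𝓝 0) := by
    have := hbase.log one_ne_zero
    simpa using this
  have h4 : Tendsto (fun n : ℕ => (n:ℝ) * Real.log (1 + (x+1)/(n:ℝ))) atTop (𝓝 (x+1)) := by
    have hp := (Real.tendsto_one_add_div_pow_exp (x+1)).log (Real.exp_pos _).ne'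
    rw [Real.log_exp] at hp
    have e : (fun n : ℕ => Real.log ((1 + (x+1)/(n:ℝ))^n)) =
        fun n : ℕ => (n:ℝ) * Real.log (1 + (x+1)/(n:ℝ)) := by
      funext n; rw [Real.log_pow]
    rwa [e] at hp
  have h5 : Tendsto (fun n : ℕ => (x + n + 1/2) * Real.log (1 + (x+1)/(n:ℝ))) atTop
      (𝓝 (x+1)) := by
    have := (h3.const_mul (x + 1/2)).add h4
    rw [mul_zero, zero_add] at this
    apply this.congr
    intro n; ring
  have hfin : Tendsto g atTop
      (𝓝 (Real.log (Real.sqrt Real.pi) + (1/2)*Real.log 2 + 0 - (x+1) + x + 1)) := by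
    exact ((((h1.add_const _).add h2).sub h5).add_const x).add_const 1
  have e2 : Real.log (Real.sqrt Real.pi) + (1/2)*Real.log 2 + 0 - (x+1) + x + 1 =
      Real.log (Real.sqrt (2*Real.pi)) := by
    rw [Real.log_sqrt Real.pi_pos.le, Real.log_sqrt (by positivity),
      Real.log_mul two_ne_zero Real.pi_ne_zero]
    ring
  rw [e2] at hfin
  exact hfin.congr' heq.symm

theorem stmt_0 (x : ℝ) (hx : 0 < x) :
    x ^ (x - 1/2) / (Real.Gamma x * Real.exp x) < 1 / Real.sqrt (2 * Real.pi) := by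
  have hGpos : 0 < Real.Gamma x := Real.Gamma_pos_of_pos hx
  have hanti : Antitone (fun n : ℕ => Fb (x + n + 1)) := by
    apply antitone_nat_of_succ_le
    intro n
    have h := Fb_step (show (0:ℝ) < x + n + 1 by positivity)
    have e : x + ((n:ℝ)+1) + 1 = (x + n + 1) + 1 := by ring
    push_cast
    rw [e]
    exact h.le
  have hlim := Fb_tendsto hx
  have hL : Real.log (Real.sqrt (2*Real.pi)) ≤ Fb (x + 1) := by
    have := hanti.le_of_tendsto hlim 0
    simpa using this
  have hmain : Real.log (Real.sqrt (2*Real.pi)) < Fb x :=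
    lt_of_le_of_lt hL (Fb_step hx)
  have hsq : 0 < Real.sqrt (2*Real.pi) := Real.sqrt_pos.mpr (by positivity)
  rw [div_lt_div_iff₀ (by positivity) hsq]
  rw [← Real.log_lt_log_iff (by positivity) (by positivity)]
  rw [Real.log_mul (by positivity) hsq.ne', Real.log_rpow hx, one_mul,
    Real.log_mul hGpos.ne' (Real.exp_pos x).ne', Real.log_exp]
  unfold Fb at hmain
  linarith
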